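/- For any rotation matrix R ∈ SO(3), the squared norm of vex(P_a(R)) equals 4(1 - ||R||_I)·||R||_I, where P_a(R) = (R - Rᵀ)/2, vex is the inverse of the hat map on skew-symmetric matrices, and ||R||_I = (1/4)Tr(I₃ - R). -/
import Mathlib


open Matrix

/-- Hat map: skew-symmetric matrix with `hat y *ᵥ z = y × z`. -/
noncomputable def hat (y : Fin 3 → ℝ) : Matrix (Fin 3) (Fin 3) ℝ :=
  !![0, -y 2, y 1; y 2, 0, -y 0; -y 1, y 0, 0]

/-- Anti-symmetric projection. -/
noncomputable def Pa (A : Matrix (Fin 3) (Fin 3) ℝ) : Matrix (Fin 3) (Fin 3) ℝ :=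
  (1/2 : ℝ) • (A - Aᵀ)

/-- Inverse of the hat map on skew-symmetric matrices. -/
noncomputable def vex (A : Matrix (Fin 3) (Fin 3) ℝ) : Fin 3 → ℝ :=
  ![A 2 1, A 0 2, A 1 0]

/-- Normalized Euclidean distance on SO(3). -/
noncomputable def normI (R : Matrix (Fin 3) (Fin 3) ℝ) : ℝ :=
  (1/4) * Matrix.trace (1 - R)

/-- Membership in SO(3). -/
def SO3 (R : Matrix (Fin 3) (Fin 3) ℝ) : Prop :=
  R * Rᵀ = 1 ∧ Rᵀ * R = 1 ∧ R.det = 1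

theorem vex_Pa_norm_sq (R : Matrix (Fin 3) (Fin 3) ℝ) (hR : SO3 R) :
    ∑ i, (vex (Pa R) i) ^ 2 = 4 * (1 - normI R) * normI R := by
  obtain ⟨h1, h2, hdet⟩ := hR
  have hadj : R.adjugate = Rᵀ := by
    calc R.adjugate = R.adjugate * (R * Rᵀ) := by rw [h1, mul_one]
      _ = (R.adjugate * R) * Rᵀ := by rw [mul_assoc]
      _ = Rᵀ := by rw [Matrix.adjugate_mul, hdet, one_smul, one_mul]
  rw [Matrix.adjugate_fin_three] at hadj
  have c1 := congrFun (congrFun hadj 0) 0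
  have c2 := congrFun (congrFun hadj 1) 1
  have c3 := congrFun (congrFun hadj 2) 2
  have e1 := congrFun (congrFun h1 0) 0
  have e2 := congrFun (congrFun h1 1) 1
  have e3 := congrFun (congrFun h1 2) 2
  simp [Matrix.mul_apply, Fin.sum_univ_three, Matrix.one_apply,
    Matrix.transpose_apply, Matrix.cons_val_zero, Matrix.cons_val_one] at c1 c2 c3 e1 e2 e3
  simp [vex, Pa, normI, Matrix.trace, Matrix.diag, Fin.sum_univ_three,
    Matrix.transpose_apply, Matrix.one_apply]
  ring_nf
  nlinarith [c1, c2, c3, e1, e2, e3]
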